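/- The quantity J^d = (ln u)_{xx}^d := (2/(x_{1,0}−x_{-1,0}))·[(ln u_{1,0} − ln u_{0,0})/(x_{1,0}−x_{0,0}) − (ln u_{0,0} − ln u_{-1,0})/(x_{0,0}−x_{-1,0})] is invariant under the heat-equation symmetry group: replacing every x_{m,0} by X_{m,0} and ln u_{m,0} by ln U_{m,0} leaves its value unchanged, provided the three points have equal time coordinates. -/
import Mathlib

/-- The discrete second derivative `(ln u)_{xx}^d` is invariant under the
heat-equation symmetry group, applied diagonally to three points sharing the
same time coordinate. -/
theorem second_difference_invariant
    (l1 l2 l3 l4 : ℝ) (xm1 x0 x1 t : ℝ) (um1 u0 u1 : ℝ)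
    (hum1 : 0 < um1) (hu0 : 0 < u0) (hu1 : 0 < u1)
    (h10 : x1 ≠ x0) (h0m1 : x0 ≠ xm1) (h1m1 : x1 ≠ xm1)
    (X : ℝ → ℝ) (hX : X = fun x => x + 2 * l3 * Real.exp t + l2)
    (lnU : ℝ → ℝ → ℝ)
    (hlnU : lnU = fun x u => Real.log u - l3 * Real.exp t * x
      - l3 ^ 2 * Real.exp (2 * t) + l4 * Real.exp t) :
    (2 / (X x1 - X xm1)) *
      ((lnU x1 u1 - lnU x0 u0) / (X x1 - X x0)
        - (lnU x0 u0 - lnU xm1 um1) / (X x0 - X xm1))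
    =
    (2 / (x1 - xm1)) *
      ((Real.log u1 - Real.log u0) / (x1 - x0)
        - (Real.log u0 - Real.log um1) / (x0 - xm1)) := by
  subst hX hlnU
  simp only
  have h10' : x1 - x0 ≠ 0 := sub_ne_zero.mpr h10
  have h0m1' : x0 - xm1 ≠ 0 := sub_ne_zero.mpr h0m1
  have h1m1' : x1 - xm1 ≠ 0 := sub_ne_zero.mpr h1m1
  have e1 : x1 + 2 * l3 * Real.exp t + l2 - (xm1 + 2 * l3 * Real.exp t + l2) = x1 - xm1 := by ring
  have e2 : x1 + 2 * l3 * Real.exp t + l2 - (x0 + 2 * l3 * Real.exp t + l2) = x1 - x0 := by ring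
  have e3 : x0 + 2 * l3 * Real.exp t + l2 - (xm1 + 2 * l3 * Real.exp t + l2) = x0 - xm1 := by ring
  rw [e1, e2, e3]
  field_simp
  ring
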